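/- sp(f) is finite if and only if f is a finite sum of elements of P (including the empty sum 0), where P = {g : sp(g) is a singleton}. -/

import Mathlib

theorem stmt_9
    (C : Type*) [Field C] (E : Type*) [AddCommGroup E] [Module C E]
    (Γ : Type*) [LinearOrder Γ]
    (v : E → WithTop Γ)
    (hv0 : ∀ f : E, v f = ⊤ ↔ f = 0)
    (hvc : ∀ (c : C) (f : E), c ≠ 0 → v (c • f) = v f)
    (hva : ∀ f g : E, min (v f) (v g) ≤ v (f + g))
    (tr : E → Γ → E)
    (t1 : ∀ (f : E) (α : Γ), (α : WithTop Γ) ≤ v (f - tr f α))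
    (t2 : ∀ (f : E) (α : Γ), (α : WithTop Γ) ≤ v f → tr f α = 0)
    (t3 : ∀ (f : E) (α β : Γ), α < β → tr (tr f α) β = tr f α)
    (t4a : ∀ (f g : E) (α : Γ), tr (f + g) α = tr f α + tr g α)
    (t4s : ∀ (c : C) (f : E) (α : Γ), tr (c • f) α = c • tr f α)
    (f : E) :
    ({γ : Γ | v (f - tr f γ) = (γ : WithTop Γ)}).Finite ↔
      ∃ (n : ℕ) (fs : Fin n → E),
        (∀ i, ∃ δ : Γ, {γ : Γ | v (fs i - tr (fs i) γ) = (γ : WithTop Γ)} = {δ}) ∧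
        f = ∑ i, fs i := by
  have vneg : ∀ a : E, v (-a) = v a := by
    intro a
    have h := hvc (-1 : C) a (by norm_num)
    rwa [neg_one_smul] at h
  have vsub : ∀ a b : E, min (v a) (v b) ≤ v (a - b) := by
    intro a b
    have h := hva a (-b)
    rwa [vneg, ← sub_eq_add_neg] at h
  have vaddlt : ∀ a b : E, v a < v b → v (a + b) = v a := by
    intro a b hab
    refine le_antisymm ?_ ?_
    · by_contra hc
      push_neg at hc
      have h2 := vsub (a + b) b
      rw [add_sub_cancel_right] at h2
      exact absurd h2 (not_le.mpr (lt_min hc hab))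
    · calc v a = min (v a) (v b) := (min_eq_left hab.le).symm
        _ ≤ v (a + b) := hva a b
  have trneg : ∀ (a : E) (α : Γ), tr (-a) α = - tr a α := by
    intro a α
    have h := t4s (-1 : C) a α
    rwa [neg_one_smul, neg_one_smul] at h
  have trsub : ∀ (a b : E) (α : Γ), tr (a - b) α = tr a α - tr b α := by
    intro a b α
    rw [sub_eq_add_neg, t4a, trneg, ← sub_eq_add_neg]
  have tr0 : ∀ α : Γ, tr (0 : E) α = 0 := by
    intro α
    apply t2
    rw [(hv0 0).mpr rfl]
    exact le_top
  have sp0 : {γ : Γ | v ((0:E) - tr (0:E) γ) = (γ : WithTop Γ)} = ∅ := by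
    ext γ
    simp [tr0, (hv0 0).mpr rfl]
  have spadd : ∀ a b : E,
      {γ : Γ | v (a + b - tr (a + b) γ) = (γ : WithTop Γ)} ⊆
        {γ : Γ | v (a - tr a γ) = (γ : WithTop Γ)} ∪ {γ : Γ | v (b - tr b γ) = (γ : WithTop Γ)} := by
    intro a b γ hγ
    simp only [Set.mem_setOf_eq] at hγ
    by_contra hc
    simp only [Set.mem_union, Set.mem_setOf_eq, not_or] at hc
    have ha : (γ : WithTop Γ) < v (a - tr a γ) := lt_of_le_of_ne (t1 a γ) (Ne.symm hc.1)
    have hb : (γ : WithTop Γ) < v (b - tr b γ) := lt_of_le_of_ne (t1 b γ) (Ne.symm hc.2)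
    have he : a + b - tr (a + b) γ = (a - tr a γ) + (b - tr b γ) := by rw [t4a]; abel
    rw [he] at hγ
    have h := hva (a - tr a γ) (b - tr b γ)
    rw [hγ] at h
    exact absurd h (not_le.mpr (lt_min ha hb))
  have spempty : ∀ g : E, {γ : Γ | v (g - tr g γ) = (γ : WithTop Γ)} = ∅ → g = 0 := by
    intro g h
    by_contra hg
    have hne : v g ≠ ⊤ := fun h' => hg ((hv0 g).mp h')
    obtain ⟨γ0, hγ0⟩ := WithTop.ne_top_iff_exists.mp hne
    have hm : v (g - tr g γ0) = (γ0 : WithTop Γ) := by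
      rw [t2 g γ0 hγ0.le, sub_zero, hγ0]
    have : γ0 ∈ {γ : Γ | v (g - tr g γ) = (γ : WithTop Γ)} := hm
    rw [h] at this
    exact this
  have main : ∀ (n : ℕ) (g : E) (hg : ({γ : Γ | v (g - tr g γ) = (γ : WithTop Γ)}).Finite),
      hg.toFinset.card = n →
      ∃ (m : ℕ) (fs : Fin m → E),
        (∀ i, ∃ δ : Γ, {γ : Γ | v (fs i - tr (fs i) γ) = (γ : WithTop Γ)} = {δ}) ∧
        g = ∑ i, fs i := by
    intro n
    induction n with
    | zero =>
      intro g hg hcard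
      have hempty : {γ : Γ | v (g - tr g γ) = (γ : WithTop Γ)} = ∅ := by
        have h := Finset.card_eq_zero.mp hcard
        rwa [Set.Finite.toFinset_eq_empty] at h
      refine ⟨0, Fin.elim0, fun i => i.elim0, ?_⟩
      simpa using spempty g hempty
    | succ n ih =>
      intro g hg hcard
      have hne : hg.toFinset.Nonempty := Finset.card_pos.mp (by omega)
      set γm := hg.toFinset.max' hne with hγm
      set a := g - tr g γm with ha
      set b := tr g γm with hb
      have hmem : v a = (γm : WithTop Γ) := by
        have h := hg.toFinset.max'_mem hne
        rw [Set.Finite.mem_toFinset] at h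
        exact h
      have hmax : ∀ γ ∈ hg.toFinset, γ ≤ γm := fun γ h => hg.toFinset.le_max' γ h
      have htrsplit : ∀ γ : Γ, tr g γ = tr a γ + tr b γ := by
        intro γ
        rw [ha, hb, ← t4a]
        congr 1
        abel
      have spa : {γ : Γ | v (a - tr a γ) = (γ : WithTop Γ)} = {γm} := by
        ext γ
        simp only [Set.mem_setOf_eq, Set.mem_singleton_iff]
        constructor
        · intro h
          by_contra hne'
          rcases lt_or_gt_of_ne hne' with hlt | hgt
          · have htr : tr a γ = 0 := t2 a γ (by rw [hmem]; exact_mod_cast hlt.le)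
            rw [htr, sub_zero, hmem] at h
            exact hne' (by exact_mod_cast h.symm)
          · have htr : tr a γ = tr g γ - tr g γm := by
              rw [ha, trsub, t3 g γm γ hgt]
            have he : a - tr a γ = g - tr g γ := by rw [htr, ha]; abel
            rw [he] at h
            have hm' : γ ∈ hg.toFinset := by rw [Set.Finite.mem_toFinset]; exact h
            exact absurd (hmax γ hm') (not_le.mpr hgt)
        · intro h
          subst h
          rw [t2 a γm (by rw [hmem]), sub_zero, hmem]
      have spb : {γ : Γ | v (b - tr b γ) = (γ : WithTop Γ)} =
          {γ : Γ | v (g - tr g γ) = (γ : WithTop Γ)} \ {γm} := by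
        ext γ
        simp only [Set.mem_setOf_eq, Set.mem_diff, Set.mem_singleton_iff]
        rcases lt_trichotomy γ γm with hlt | heq | hgt
        · have h2 : tr a γ = 0 := t2 a γ (by rw [hmem]; exact_mod_cast hlt.le)
          have htrb : tr b γ = tr g γ := by
            have h1 := htrsplit γ
            rw [h2, zero_add] at h1
            exact h1.symm
          have he : b - tr b γ = (g - tr g γ) + (-a) := by rw [htrb, ha, hb]; abel
          constructor
          · intro h
            refine ⟨?_, hlt.ne⟩
            by_contra hc
            have hgt1 : (γ : WithTop Γ) < v (g - tr g γ) := lt_of_le_of_ne (t1 g γ) (Ne.symm hc)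
            have hgt2 : (γ : WithTop Γ) < v (-a) := by
              rw [vneg, hmem]; exact_mod_cast hlt
            have h3 := hva (g - tr g γ) (-a)
            rw [← he, h] at h3
            exact absurd h3 (not_le.mpr (lt_min hgt1 hgt2))
          · rintro ⟨h, -⟩
            rw [he, vaddlt _ _ (by rw [h, vneg, hmem]; exact_mod_cast hlt), h]
        · rw [heq]
          have htrb : tr b γm = b := by
            have h1 := htrsplit γm
            rw [t2 a γm (by rw [hmem]), zero_add] at h1
            rw [← h1, hb]
          constructor
          · intro h
            rw [htrb, sub_self, (hv0 0).mpr rfl] at h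
            exact absurd h (by simp)
          · rintro ⟨-, h⟩
            exact absurd rfl h
        · constructor
          · intro h
            have htrb : tr b γ = b := by rw [hb, t3 g γm γ hgt]
            rw [htrb, sub_self, (hv0 0).mpr rfl] at h
            exact absurd h (by simp)
          · rintro ⟨h, -⟩
            have hm' : γ ∈ hg.toFinset := by rw [Set.Finite.mem_toFinset]; exact h
            exact absurd (hmax γ hm') (not_le.mpr hgt)
      have hbfin : ({γ : Γ | v (b - tr b γ) = (γ : WithTop Γ)}).Finite := by
        rw [spb]; exact hg.diff
      have hbcard : hbfin.toFinset.card = n := by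
        have he : hbfin.toFinset = hg.toFinset.erase γm := by
          ext γ
          simp only [Set.Finite.mem_toFinset, Finset.mem_erase, spb, Set.mem_diff,
            Set.mem_setOf_eq, Set.mem_singleton_iff]
          tauto
        rw [he, Finset.card_erase_of_mem (hg.toFinset.max'_mem hne), hcard]
        rfl
      obtain ⟨m, fs, hfs, hsum⟩ := ih b hbfin hbcard
      refine ⟨m + 1, Fin.cons a fs, ?_, ?_⟩
      · intro i
        refine Fin.cases ?_ ?_ i
        · exact ⟨γm, by simpa using spa⟩
        · intro j
          simpa using hfs j
      · rw [Fin.sum_cons, ← hsum, ha, hb]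
        abel
  constructor
  · intro hfin
    exact main hfin.toFinset.card f hfin rfl
  · rintro ⟨n, fs, hfs, rfl⟩
    have key : ∀ s : Finset (Fin n),
        {γ : Γ | v ((∑ i ∈ s, fs i) - tr (∑ i ∈ s, fs i) γ) = (γ : WithTop Γ)} ⊆
          ⋃ i ∈ s, {γ : Γ | v (fs i - tr (fs i) γ) = (γ : WithTop Γ)} := by
      intro s
      induction s using Finset.induction with
      | empty =>
        rw [Finset.sum_empty, sp0]
        exact Set.empty_subset _
      | @insert c s' hnotmem ihs =>
        rw [Finset.sum_insert hnotmem, Finset.set_biUnion_insert]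
        exact (spadd _ _).trans (Set.union_subset_union_right _ ihs)
    refine Set.Finite.subset ?_ (by simpa using key Finset.univ)
    apply Set.finite_iUnion
    intro i
    obtain ⟨δ, hδ⟩ := hfs i
    rw [hδ]
    exact Set.finite_singleton δ
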